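/- Let r ≥ 2, let (n,χ) be an l-coloring of the edges of the complete graph on [n], let v ∈ [n], let A ⊆ [n] with v < A (v less than every element of A), and let B be obtained from A by deleting the first l(r-2)+1 and the last l(r-2)+1 elements. If the edges {v,w}, w ∈ B, do not all have the same color, then (n,χ) contains an r-rich coloring. -/

import Mathlib

/-- A (directed representation of an) edge: a pair of vertices `p` with `p.1 < p.2`. -/
abbrev Edge (n : ℕ) := {p : Fin n × Fin n // p.1 < p.2}

/-- An edge-`C`-colored complete graph: a number of vertices together with a coloring
of all edges by elements of `C`. -/
abbrev Coloring (C : Type) := (n : ℕ) × (Edge n → C)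

/-- Build an edge from natural numbers `i < j < n`. -/
def mkE {n : ℕ} (i j : ℕ) (hij : i < j) (hj : j < n) : Edge n :=
  ⟨(⟨i, lt_trans hij hj⟩, ⟨j, hj⟩), Fin.mk_lt_mk.mpr hij⟩

/-- The image of an edge under a strictly increasing vertex map. -/
def edgeMap {a b : ℕ} (f : Fin a → Fin b) (hf : StrictMono f) (e : Edge a) : Edge b :=
  ⟨(f e.1.1, f e.1.2), hf e.2⟩

/-- Containment of colorings: `K ⪯ L` via a strictly increasing vertex map that sends
the color of each edge to a `le`-larger color. -/
def ColLe {C : Type} (le : C → C → Prop) (K L : Coloring C) : Prop :=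
  ∃ f : Fin K.1 → Fin L.1, ∃ hf : StrictMono f,
    ∀ e : Edge K.1, le (K.2 e) (L.2 (edgeMap f hf e))

/-- A lower ideal of colorings. -/
def IsIdeal {C : Type} (le : C → C → Prop) (X : Set (Coloring C)) : Prop :=
  ∀ K L : Coloring C, ColLe le K L → L ∈ X → K ∈ X

/-- The reversal of an edge under the order-reversing permutation of the vertices. -/
def revE {n : ℕ} (e : Edge n) : Edge n :=
  ⟨(e.1.2.rev, e.1.1.rev), Fin.rev_lt_rev.mpr e.2⟩

/-- The reversal of a coloring. -/
def revC {n : ℕ} {C : Type} (χ : Edge n → C) : Edge n → C := fun e => χ (revE e)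

/-- A coloring on `2r-1` vertices is of type 1 (0-indexed version of:
`χ({i,i+1}) = a` for `1 ≤ i ≤ r-1` and `χ({r,r+1}) = b` for two distinct colors). -/
def Type1 {C : Type} (r : ℕ) (χ : Edge (2 * r - 1) → C) : Prop :=
  ∃ a b : C, a ≠ b ∧
    (∀ (t : ℕ) (h : t + 2 ≤ r), χ (mkE t (t + 1) (by omega) (by omega)) = a) ∧
    (∀ h : r < 2 * r - 1, χ (mkE (r - 1) r (by omega) h) = b)

/-- A coloring on `2r-1` vertices is of type 2 (0-indexed version of:
`χ({1,i}) = a` for `2 ≤ i ≤ r` and `χ({1,r+1}) = b` for two distinct colors). -/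
def Type2 {C : Type} (r : ℕ) (χ : Edge (2 * r - 1) → C) : Prop :=
  ∃ a b : C, a ≠ b ∧
    (∀ (t : ℕ) (h1 : 1 ≤ t) (h2 : t ≤ r - 1), χ (mkE 0 t (by omega) (by omega)) = a) ∧
    (∀ h : r < 2 * r - 1, χ (mkE 0 r (by omega) h) = b)

/-- An `r`-rich coloring: on `2r-1` vertices, of type 1 or type 2, in it or its reversal. -/
def Rich {C : Type} (r : ℕ) (χ : Edge (2 * r - 1) → C) : Prop :=
  Type1 r χ ∨ Type1 r (revC χ) ∨ Type2 r χ ∨ Type2 r (revC χ)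

/-- `(n,χ)` contains an `r`-rich coloring (with respect to discrete containment). -/
def ContainsRich {C : Type} {n : ℕ} (r : ℕ) (χ : Edge n → C) : Prop :=
  ∃ χ' : Edge (2 * r - 1) → C, Rich r χ' ∧
    ∃ f : Fin (2 * r - 1) → Fin n, ∃ hf : StrictMono f,
      ∀ e : Edge (2 * r - 1), χ' e = χ (edgeMap f hf e)

def myf {n r : ℕ} (v t : Fin n) (g : Fin (r-1) → Fin n) (u : Fin (r-2) → Fin n) :
    Fin (2*r-1) → Fin n :=
  fun i => if h0 : i.val = 0 then v
    else if h1 : i.val ≤ r - 1 then g ⟨i.val - 1, by omega⟩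
    else if h2 : i.val = r then t
    else u ⟨i.val - (r+1), by have := i.isLt; omega⟩

lemma myf_mono {n r : ℕ} (hr : 2 ≤ r) (v t : Fin n) (g : Fin (r-1) → Fin n)
    (u : Fin (r-2) → Fin n) (hg : StrictMono g) (hu : StrictMono u)
    (hvg : ∀ k, v < g k) (hgt : ∀ k, g k < t) (htu : ∀ k, t < u k) (hvt : v < t) :
    StrictMono (myf v t g u) := by
  have hvu : ∀ k, v < u k := fun k => lt_trans hvt (htu k)
  have hgu : ∀ k k', g k < u k' := fun k k' => lt_trans (hgt k) (htu k')
  intro i j hij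
  have hi := i.isLt; have hj := j.isLt
  have hij' : i.val < j.val := hij
  unfold myf
  split_ifs <;>
    first
      | omega
      | exact hvg _
      | exact hvt
      | exact hvu _
      | exact hgt _
      | exact hgu _ _
      | exact htu _
      | (refine hg ?_; exact Fin.mk_lt_mk.mpr (by omega))
      | (refine hu ?_; exact Fin.mk_lt_mk.mpr (by omega))

lemma myf_val0 {n r : ℕ} (v t : Fin n) (g : Fin (r-1) → Fin n) (u : Fin (r-2) → Fin n)
    (h : (0:ℕ) < 2*r-1) : myf v t g u ⟨0, h⟩ = v := by
  unfold myf; rw [dif_pos (show (0:ℕ) = 0 from rfl)]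

lemma myf_valg {n r : ℕ} (v t : Fin n) (g : Fin (r-1) → Fin n) (u : Fin (r-2) → Fin n)
    (s : ℕ) (hs1 : 1 ≤ s) (hs2 : s ≤ r - 1) (h : s < 2*r-1) :
    myf v t g u ⟨s, h⟩ = g ⟨s - 1, by omega⟩ := by
  unfold myf
  rw [dif_neg (show ¬(s = 0) by omega), dif_pos (show s ≤ r - 1 from hs2)]

lemma myf_valr {n r : ℕ} (hr : 2 ≤ r) (v t : Fin n) (g : Fin (r-1) → Fin n)
    (u : Fin (r-2) → Fin n) (h : r < 2*r-1) :
    myf v t g u ⟨r, h⟩ = t := by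
  unfold myf
  rw [dif_neg (show ¬(r = 0) by omega), dif_neg (show ¬(r ≤ r - 1) by omega),
    dif_pos (show r = r from rfl)]

lemma aux2 {l n : ℕ} (r : ℕ) (hr : 2 ≤ r) (χ : Edge n → Fin l) (v t : Fin n) (c : Fin l)
    (T U : Finset (Fin n)) (hTcard : T.card = r - 1) (hUcard : U.card = r - 2)
    (hvT : ∀ x ∈ T, v < x) (hTt : ∀ x ∈ T, x < t) (htU : ∀ x ∈ U, t < x)
    (hvt : v < t)
    (hTc : ∀ x ∈ T, ∀ h : v < x, χ ⟨(v, x), h⟩ = c)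
    (hbt : χ ⟨(v, t), hvt⟩ ≠ c) :
    ∃ χ' : Edge (2 * r - 1) → Fin l, Type2 r χ' ∧
      ∃ f : Fin (2 * r - 1) → Fin n, ∃ hf : StrictMono f,
        ∀ e : Edge (2 * r - 1), χ' e = χ (edgeMap f hf e) := by
  have hgT : ∀ k, T.orderEmbOfFin hTcard k ∈ T := fun k => T.orderEmbOfFin_mem hTcard k
  have huU : ∀ k, U.orderEmbOfFin hUcard k ∈ U := fun k => U.orderEmbOfFin_mem hUcard k
  set g : Fin (r-1) → Fin n := fun k => T.orderEmbOfFin hTcard k with hgdef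
  set u : Fin (r-2) → Fin n := fun k => U.orderEmbOfFin hUcard k with hudef
  have hf : StrictMono (myf v t g u) := myf_mono hr v t g u
    (fun a b hab => (T.orderEmbOfFin hTcard).strictMono hab)
    (fun a b hab => (U.orderEmbOfFin hUcard).strictMono hab)
    (fun k => hvT _ (hgT k)) (fun k => hTt _ (hgT k)) (fun k => htU _ (huU k)) hvt
  refine ⟨fun e => χ (edgeMap (myf v t g u) hf e), ?_, myf v t g u, hf, fun e => rfl⟩
  refine ⟨c, χ ⟨(v, t), hvt⟩, Ne.symm hbt, ?_, ?_⟩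
  · intro s hs1 hs2
    have he : edgeMap (myf v t g u) hf (mkE 0 s (by omega) (by omega))
        = ⟨(v, g ⟨s - 1, by omega⟩), hvT _ (hgT _)⟩ := by
      apply Subtype.ext
      apply Prod.ext
      · exact myf_val0 v t g u (by omega)
      · exact myf_valg v t g u s hs1 hs2 _
    show χ (edgeMap (myf v t g u) hf _) = c
    rw [he]
    exact hTc _ (hgT _) _
  · intro hlt
    have he : edgeMap (myf v t g u) hf (mkE 0 r (by omega) hlt) = ⟨(v, t), hvt⟩ := by
      apply Subtype.ext
      apply Prod.ext
      · exact myf_val0 v t g u (by omega)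
      · exact myf_valr hr v t g u _
    show χ (edgeMap (myf v t g u) hf _) = _
    rw [he]

lemma aux1 {l r n : ℕ} (hr : 2 ≤ r) (hl : 0 < l) (χ : Edge n → Fin l) (v : Fin n)
    (A : Finset (Fin n)) (hvA : ∀ a ∈ A, v < a)
    (w w' : Fin n)
    (hwA : w ∈ A) (hw'A : w' ∈ A)
    (hwS : l * (r - 2) + 1 ≤ (A.filter (fun y => y < w)).card)
    (hwU : l * (r - 2) + 1 ≤ (A.filter (fun y => w < y)).card)
    (hw'U : l * (r - 2) + 1 ≤ (A.filter (fun y => w' < y)).card)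
    (hww' : w < w') (hvw : v < w) (hvw' : v < w')
    (hdiff : χ ⟨(v, w), hvw⟩ ≠ χ ⟨(v, w'), hvw'⟩) :
    ∃ χ' : Edge (2 * r - 1) → Fin l, Type2 r χ' ∧
      ∃ f : Fin (2 * r - 1) → Fin n, ∃ hf : StrictMono f,
        ∀ e : Edge (2 * r - 1), χ' e = χ (edgeMap f hf e) := by
  classical
  set col : Fin n → Fin l := fun x => if h : v < x then χ ⟨(v, x), h⟩ else ⟨0, hl⟩ with hcol
  have hcolval : ∀ (x : Fin n) (h : v < x), col x = χ ⟨(v, x), h⟩ := by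
    intro x h; simp only [hcol, dif_pos h]
  set S := A.filter (fun y => y < w) with hS
  -- pigeonhole
  have hmaps : ∀ x ∈ S, col x ∈ (Finset.univ : Finset (Fin l)) := fun x _ => Finset.mem_univ _
  have hcard : (Finset.univ : Finset (Fin l)).card * (r - 2) < S.card := by
    rw [Finset.card_univ, Fintype.card_fin]; omega
  obtain ⟨c, -, hc⟩ := Finset.exists_lt_card_fiber_of_mul_lt_card_of_maps_to hmaps hcard
  set T0 := S.filter (fun x => col x = c) with hT0
  have hT0card : r - 1 ≤ T0.card := by omega
  obtain ⟨T, hTsub, hTcard⟩ := Finset.exists_subset_card_eq (s := T0) (n := r - 1) hT0card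
  have hTprops : ∀ x ∈ T, x ∈ A ∧ x < w ∧ col x = c := by
    intro x hx
    have := hTsub hx
    rw [hT0, Finset.mem_filter, hS, Finset.mem_filter] at this
    exact ⟨this.1.1, this.1.2, this.2⟩
  -- choose target t
  by_cases hcw : col w = c
  · -- use w' as target
    have hbt' : col w' ≠ c := by
      rw [hcolval w' hvw']
      rw [hcolval w hvw] at hcw
      rw [← hcw]; exact (Ne.symm hdiff)
    obtain ⟨U, hUsub, hUcard⟩ := Finset.exists_subset_card_eq (s := A.filter (fun y => w' < y)) (n := r - 2)
      (by have := Nat.le_mul_of_pos_left (r - 2) hl; omega)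
    refine aux2 r hr χ v w' c T U hTcard hUcard
      (fun x hx => hvA x (hTprops x hx).1)
      (fun x hx => lt_trans (hTprops x hx).2.1 hww')
      (fun x hx => (Finset.mem_filter.mp (hUsub hx)).2) hvw'
      (fun x hx h => by rw [← hcolval x h]; exact (hTprops x hx).2.2)
      (by rw [← hcolval w' hvw']; exact hbt')
  · -- use w as target
    obtain ⟨U, hUsub, hUcard⟩ := Finset.exists_subset_card_eq (s := A.filter (fun y => w < y)) (n := r - 2)
      (by have := Nat.le_mul_of_pos_left (r - 2) hl; omega)
    refine aux2 r hr χ v w c T U hTcard hUcard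
      (fun x hx => hvA x (hTprops x hx).1)
      (fun x hx => (hTprops x hx).2.1)
      (fun x hx => (Finset.mem_filter.mp (hUsub hx)).2) hvw
      (fun x hx h => by rw [← hcolval x h]; exact (hTprops x hx).2.2)
      (by rw [← hcolval w hvw]; exact hcw)

/-- Let `r ≥ 2`, `(n,χ)` an edge `[l]`-colored complete graph, `v` a vertex
with `v < A`, and `B` the set obtained from `A` by deleting its first `l(r-2)+1` and last
`l(r-2)+1` elements. If the edges `{v,w}`, `w ∈ B`, do not all have the same color, then
`(n,χ)` contains an `r`-rich coloring. -/
theorem stmt_13 (l r n : ℕ) (hr : 2 ≤ r) (χ : Edge n → Fin l) (v : Fin n)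
    (A : Finset (Fin n)) (hvA : ∀ a ∈ A, v < a)
    (B : Finset (Fin n))
    (hB : B = A.filter (fun x =>
      l * (r - 2) + 1 ≤ (A.filter (fun y => y < x)).card ∧
      l * (r - 2) + 1 ≤ (A.filter (fun y => x < y)).card))
    (hne : ¬ ∀ w ∈ B, ∀ w' ∈ B, ∀ (h1 : v < w) (h2 : v < w'),
        χ ⟨(v, w), h1⟩ = χ ⟨(v, w'), h2⟩) :
    ContainsRich r χ := by
  classical
  push_neg at hne
  obtain ⟨w, hwB, w', hw'B, h1, h2, hdiff⟩ := hne
  have hl : 0 < l := (χ ⟨(v, w), h1⟩).pos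
  rw [hB, Finset.mem_filter] at hwB hw'B
  have get : ∀ χ'' : Edge (2*r-1) → Fin l, Type2 r χ'' →
      (∃ f : Fin (2 * r - 1) → Fin n, ∃ hf : StrictMono f,
        ∀ e : Edge (2 * r - 1), χ'' e = χ (edgeMap f hf e)) → ContainsRich r χ := by
    rintro χ'' hT2 ⟨f, hf, hc⟩
    exact ⟨χ'', Or.inr (Or.inr (Or.inl hT2)), f, hf, hc⟩
  rcases lt_trichotomy w w' with hlt | heq | hgt
  · obtain ⟨χ'', hT2, hex⟩ := aux1 hr hl χ v A hvA w w' hwB.1 hw'B.1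
      hwB.2.1 hwB.2.2 hw'B.2.2 hlt h1 h2 hdiff
    exact get χ'' hT2 hex
  · subst heq; exact absurd rfl hdiff
  · obtain ⟨χ'', hT2, hex⟩ := aux1 hr hl χ v A hvA w' w hw'B.1 hwB.1
      hw'B.2.1 hw'B.2.2 hwB.2.2 hgt h2 h1 (Ne.symm hdiff)
    exact get χ'' hT2 hex
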